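/- Let μ be a probability measure and W a measurable function with ∫ |W|^m dμ ≤ m v^m Γ(m/2) for all m ∈ ℕ, for some constant v > 0, and ∫ W dμ = 0. Then ∫ (e^W − 1)² dμ ≤ 4v + 3e^{v²} + 2e^{4v²} − 5. -/

import Mathlib

open MeasureTheory Real
open scoped Nat
set_option maxHeartbeats 1000000


lemma exp_eq_tsum_real (x : ℝ) : Real.exp x = ∑' n : ℕ, x ^ n / n ! := by
  rw [Real.exp_eq_exp_ℝ, NormedSpace.exp_eq_tsum_div]

lemma fact_even (k : ℕ) : 2 ^ k * (k ! * k !) ≤ (2 * k)! := by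
  induction k with
  | zero => simp
  | succ n ih =>
    have h2 : 2 * (n + 1) = 2 * n + 1 + 1 := by ring
    rw [h2, Nat.factorial_succ (2*n+1), Nat.factorial_succ (2 * n)]
    have h3 : 2 ^ (n+1) * ((n+1)! * (n+1)!) = (2 * (n+1) * (n+1)) * (2 ^ n * (n ! * n !)) := by
      rw [Nat.factorial_succ]; ring
    rw [h3]
    calc (2 * (n+1) * (n+1)) * (2 ^ n * (n ! * n !)) ≤ (2 * (n+1) * (n+1)) * (2*n)! :=
          Nat.mul_le_mul_left _ ih
      _ ≤ ((2*n+1+1) * (2*n+1)) * (2*n)! := Nat.mul_le_mul_right _ (by nlinarith)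
      _ = (2*n+1+1) * ((2*n+1) * (2*n)!) := by ring

lemma fact_odd (k : ℕ) : 4 ^ k * ((k+1)! * k !) ≤ (k+1) * (2 * k + 1)! := by
  induction k with
  | zero => simp
  | succ n ih =>
    have h2 : 2 * (n + 1) + 1 = 2 * n + 1 + 1 + 1 := by ring
    rw [h2, Nat.factorial_succ (2*n+1+1), Nat.factorial_succ (2*n+1)]
    have h3 : 4 ^ (n+1) * ((n+1+1)! * (n+1)!) = (4 * (n+1+1) * (n+1)) * (4 ^ n * ((n+1)! * n !)) := by
      rw [Nat.factorial_succ (n+1), Nat.factorial_succ n]; ring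
    rw [h3]
    calc (4 * (n+1+1) * (n+1)) * (4 ^ n * ((n+1)! * n !))
        ≤ (4 * (n+1+1) * (n+1)) * ((n+1) * (2*n+1)!) := Nat.mul_le_mul_left _ ih
      _ = (n+1+1) * ((4*(n+1)*(n+1)) * (2*n+1)!) := by ring
      _ ≤ (n+1+1) * (((2*n+1+1+1)*(2*n+1+1)) * (2*n+1)!) :=
          Nat.mul_le_mul_left _ (Nat.mul_le_mul_right _ (by nlinarith))
      _ = (n+1+1) * ((2*n+1+1+1) * ((2*n+1+1) * (2*n+1)!)) := by ring

lemma gamma_bound (k : ℕ) : Real.Gamma ((k : ℝ) + 3/2) ≤ (k+1)! := by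
  induction k with
  | zero =>
    have h : ((0:ℕ):ℝ) + 3/2 = 1/2 + 1 := by norm_num
    rw [h, Real.Gamma_add_one (by norm_num), Real.Gamma_one_half_eq]
    have : Real.sqrt π ≤ 2 := by
      rw [show (2:ℝ) = Real.sqrt 4 by rw [show (4:ℝ) = 2^2 by norm_num, Real.sqrt_sq (by norm_num)]]
      exact Real.sqrt_le_sqrt (by nlinarith [Real.pi_le_four])
    simp only [Nat.factorial]
    push_cast
    nlinarith
  | succ n ih =>
    have h : ((n+1:ℕ):ℝ) + 3/2 = ((n:ℝ) + 3/2) + 1 := by push_cast; ring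
    rw [h, Real.Gamma_add_one (by positivity)]
    have hΓ : (0:ℝ) ≤ Real.Gamma ((n:ℝ) + 3/2) := (Real.Gamma_pos_of_pos (by positivity)).le
    calc ((n:ℝ) + 3/2) * Real.Gamma ((n:ℝ) + 3/2) ≤ ((n:ℝ) + 3/2) * (n+1)! := by
          apply mul_le_mul_of_nonneg_left ih (by positivity)
      _ ≤ ((n:ℝ) + 2) * (n+1)! := by
          apply mul_le_mul_of_nonneg_right (by norm_num) (by positivity)
      _ = ((n+1+1)! : ℝ) := by
          rw [Nat.factorial_succ (n+1)]; push_cast; ring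

lemma final_ineq (v : ℝ) (hv : 0 < v) :
    4*v*(1+v^2)*Real.exp (v^2) + 2*Real.exp (2*v^2)
      ≤ 4*v + 3*Real.exp (v^2) + 2*Real.exp (4*v^2) - 3 := by
  set x := Real.exp (v^2) with hx
  have hx1 : 1 + v^2 ≤ x := by
    have := Real.add_one_le_exp (v^2); linarith
  have hx0 : (0:ℝ) < x := Real.exp_pos _
  have h2 : Real.exp (2*v^2) = x^2 := by
    rw [show 2*v^2 = v^2 + v^2 by ring, Real.exp_add]; ring
  have h4 : Real.exp (4*v^2) = x^4 := by
    rw [show 4*v^2 = 2*v^2 + 2*v^2 by ring, Real.exp_add, h2]; ring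
  rw [h2, h4]
  set a := x - 1 with ha
  have ha0 : 0 ≤ a := by nlinarith
  have hua : v^2 ≤ a := by simp only [ha]; linarith
  have h2v : 2*v ≤ 1 + a := by nlinarith [sq_nonneg (v-1)]
  have key1 : (1+v^2)*x ≤ (1+a)*(1+a) := by nlinarith
  have key2 : 4*v*((1+a)*(1+a)) - 4*v ≤ 2*(1+a)*(2*a+a^2) := by
    nlinarith [mul_nonneg (sub_nonneg.2 h2v) (by positivity : (0:ℝ) ≤ 2*a+a^2)]
  have key3 : 2*(1+a)*(2*a+a^2) + 2*(1+a)^2 ≤ 3*(1+a) + 2*(1+a)^4 - 3 := by nlinarith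
  have hxa : x = 1 + a := by simp [ha]
  have e1 : 2*x^2 = 2*(1+a)^2 := by rw [hxa]
  have e2 : 2*x^4 = 2*(1+a)^4 := by rw [hxa]
  have e3 : 3*x = 3*(1+a) := by rw [hxa]
  have H := mul_le_mul_of_nonneg_left key1 (by positivity : (0:ℝ) ≤ 4*v)
  linarith [H, key2, key3, e1, e2, e3]


lemma exp_eq_tsum_real' (x : ℝ) : Real.exp x = ∑' n : ℕ, x ^ n / n ! := by
  rw [Real.exp_eq_exp_ℝ, NormedSpace.exp_eq_tsum_div]

lemma hasSum_exp_real (x : ℝ) : HasSum (fun n : ℕ => x ^ n / n !) (Real.exp x) := by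
  have h := (Real.summable_pow_div_factorial x).hasSum
  rwa [← exp_eq_tsum_real'] at h

noncomputable def gseq (v : ℝ) (m : ℕ) : ℝ :=
  if m % 2 = 1 then 4*v*(((m/2 : ℕ) : ℝ)+1)*(v^2)^(m/2)/((m/2)! : ℝ)
  else if m = 0 then 1 else 2*(2*v^2)^(m/2)/((m/2)! : ℝ)

lemma gseq_even (v : ℝ) (k : ℕ) :
    gseq v (2*k) = if k = 0 then 1 else 2*(2*v^2)^k/(k ! : ℝ) := by
  unfold gseq
  have h1 : 2*k % 2 = 0 := by omega
  have h2 : 2*k/2 = k := by omega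
  rw [h1, h2]
  simp

lemma gseq_odd (v : ℝ) (k : ℕ) :
    gseq v (2*k+1) = 4*v*((k:ℝ)+1)*(v^2)^k/(k ! : ℝ) := by
  unfold gseq
  have h1 : (2*k+1) % 2 = 1 := by omega
  have h2 : (2*k+1)/2 = k := by omega
  rw [h1, h2]
  simp

lemma gseq_nonneg (v : ℝ) (hv : 0 ≤ v) (m : ℕ) : 0 ≤ gseq v m := by
  unfold gseq
  split_ifs <;> positivity

lemma hasSum_gseq_even (v : ℝ) :
    HasSum (fun k : ℕ => gseq v (2*k)) (2*Real.exp (2*v^2) - 1) := by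
  have h2 : HasSum (fun k : ℕ => 2*((2*v^2)^k/(k ! : ℝ))) (2*Real.exp (2*v^2)) :=
    (hasSum_exp_real (2*v^2)).mul_left 2
  have h3 : HasSum (fun k : ℕ => if k = 0 then (1:ℝ) else 0) 1 := hasSum_ite_eq 0 1
  have h4 := h2.sub h3
  have heq : (fun k : ℕ => 2*((2*v^2)^k/(k ! : ℝ)) - (if k = 0 then (1:ℝ) else 0))
      = fun k : ℕ => gseq v (2*k) := by
    funext k
    rw [gseq_even]
    rcases Nat.eq_zero_or_pos k with rfl | hk
    · norm_num
    · rw [if_neg (by omega), if_neg (by omega)]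
      ring
  rwa [heq] at h4

lemma hasSum_gseq_odd (v : ℝ) :
    HasSum (fun k : ℕ => gseq v (2*k+1)) (4*v*(1+v^2)*Real.exp (v^2)) := by
  have h1 : HasSum (fun k : ℕ => (v^2) ^ k / (k ! : ℝ)) (Real.exp (v^2)) := hasSum_exp_real _
  have h2 : HasSum (fun k : ℕ => (k:ℝ)*(v^2)^k/(k ! : ℝ)) (v^2*Real.exp (v^2)) := by
    have h0 : HasSum (fun k : ℕ => ((k+1:ℕ):ℝ)*(v^2)^(k+1)/((k+1)! : ℝ)) (v^2*Real.exp (v^2)) := by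
      have h := h1.mul_left (v^2)
      have heq : (fun k : ℕ => v^2*((v^2)^k/(k ! : ℝ)))
          = fun k : ℕ => ((k+1:ℕ):ℝ)*(v^2)^(k+1)/((k+1)! : ℝ) := by
        funext k
        have hfs : ((k+1)! : ℝ) = ((k:ℝ)+1) * (k ! : ℝ) := by
          rw [Nat.factorial_succ]; push_cast; ring
        have hk0 : (k ! : ℝ) ≠ 0 := by positivity
        rw [hfs]
        push_cast
        field_simp
        ring
      rwa [heq] at h
    have h5 := (hasSum_nat_add_iff (f := fun k : ℕ => (k:ℝ)*(v^2)^k/(k ! : ℝ)) 1).mp h0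
    simpa using h5
  have h6 := (h2.mul_left (4*v)).add (h1.mul_left (4*v))
  have heq : (fun k : ℕ => 4*v*((k:ℝ)*(v^2)^k/(k ! : ℝ)) + 4*v*((v^2)^k/(k ! : ℝ)))
      = fun k : ℕ => gseq v (2*k+1) := by
    funext k
    rw [gseq_odd]
    ring
  rw [heq] at h6
  rw [show 4*v*(1+v^2)*Real.exp (v^2) = 4*v*(v^2*Real.exp (v^2)) + 4*v*Real.exp (v^2) by ring]
  exact h6

lemma hasSum_gseq (v : ℝ) :
    HasSum (gseq v) ((2*Real.exp (2*v^2) - 1) + 4*v*(1+v^2)*Real.exp (v^2)) :=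
  (hasSum_gseq_even v).even_add_odd (hasSum_gseq_odd v)


/-- if `∫ |W|^m dμ ≤ m v^m Γ(m/2)` for all `m ∈ ℕ` and
`∫ W dμ = 0`, then `∫ (e^W − 1)² dμ ≤ 4v + 3e^{v²} + 2e^{4v²} − 5`. -/
theorem moment_bound_exp_square
    {X : Type*} [MeasurableSpace X]
    (μ : Measure X) [IsProbabilityMeasure μ]
    (W : X → ℝ) (hWm : Measurable W) (v : ℝ) (hv : 0 < v)
    (hint : Integrable W μ)
    (hintexp : Integrable (fun x => Real.exp (W x)) μ)
    (hintexp2 : Integrable (fun x => Real.exp (2 * W x)) μ)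
    (hintabs : ∀ m : ℕ, Integrable (fun x => |W x| ^ m) μ)
    (hmom : ∀ m : ℕ, 1 ≤ m →
      ∫ x, |W x| ^ m ∂μ ≤ (m : ℝ) * v ^ m * Real.Gamma ((m : ℝ) / 2))
    (hmean : ∫ x, W x ∂μ = 0) :
    ∫ x, (Real.exp (W x) - 1) ^ 2 ∂μ
      ≤ 4 * v + 3 * Real.exp (v ^ 2) + 2 * Real.exp (4 * v ^ 2) - 5 := by
  have hg := hasSum_gseq v
  have hgS : Summable (gseq v) := hg.summable
  have htsumg : ∑' m, gseq v m = (2*Real.exp (2*v^2) - 1) + 4*v*(1+v^2)*Real.exp (v^2) :=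
    hg.tsum_eq
  -- the terms of the series
  set f : ℕ → X → ℝ := fun m x => (2*|W x|)^m / (m ! : ℝ) with hfdef
  have hf_eq : ∀ m, f m = fun x => (2^m / (m ! : ℝ)) * |W x|^m := by
    intro m; funext x; simp only [hfdef, mul_pow]; ring
  have hf_nonneg : ∀ m, ∀ x : X, 0 ≤ f m x := by
    intro m x; simp only [hfdef]; positivity
  have hf_meas : ∀ m, Measurable (f m) := by
    intro m
    exact ((hWm.abs.const_mul 2).pow_const m).div_const _
  have hf_int : ∀ m, Integrable (f m) μ := by
    intro m; rw [hf_eq m]; exact (hintabs m).const_mul _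
  have hc_eq : ∀ m, ∫ x, f m x ∂μ = 2^m / (m ! : ℝ) * ∫ x, |W x|^m ∂μ := by
    intro m; rw [hf_eq m]; exact integral_const_mul _ _
  have hc_nonneg : ∀ m, 0 ≤ ∫ x, f m x ∂μ := fun m => integral_nonneg (hf_nonneg m)
  -- term-wise bound
  have hcg : ∀ m, ∫ x, f m x ∂μ ≤ gseq v m := by
    intro m
    rcases Nat.even_or_odd m with ⟨k, hk⟩ | ⟨k, hk⟩
    · -- even case, m = 2k
      have hm : m = 2*k := by omega
      subst hm
      rcases Nat.eq_zero_or_pos k with rfl | hkpos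
      · simp only [hfdef, Nat.mul_zero, pow_zero, Nat.factorial_zero, Nat.cast_one, div_one]
        have hg0 : gseq v 0 = 1 := by simp [gseq]
        rw [hg0]
        simp
      · obtain ⟨j, rfl⟩ : ∃ j, k = j + 1 := ⟨k - 1, by omega⟩
        rw [gseq_even, if_neg (by omega)]
        have h1 : ∫ x, f (2*(j+1)) x ∂μ
            ≤ 2^(2*(j+1)) / ((2*(j+1))! : ℝ)
              * (((2*(j+1) : ℕ) : ℝ) * v^(2*(j+1)) * Real.Gamma (((2*(j+1) : ℕ) : ℝ)/2)) := by
          rw [hc_eq]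
          exact mul_le_mul_of_nonneg_left (hmom _ (by omega)) (by positivity)
        have hΓ : Real.Gamma (((2*(j+1) : ℕ) : ℝ)/2) = (j ! : ℝ) := by
          rw [show (((2*(j+1) : ℕ) : ℝ))/2 = (j:ℝ)+1 by push_cast; ring]
          exact_mod_cast Real.Gamma_nat_eq_factorial j
        rw [hΓ] at h1
        refine h1.trans ?_
        have hkey : (2:ℝ)^(j+1) * (((j+1)! : ℝ) * ((j+1)! : ℝ)) ≤ ((2*(j+1))! : ℝ) := by
          exact_mod_cast fact_even (j+1)
        have hfs : ((j+1)! : ℝ) = ((j:ℝ)+1) * (j ! : ℝ) := by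
          rw [Nat.factorial_succ]; push_cast; ring
        have hv2 : v^(2*(j+1)) = (v^2)^(j+1) := by rw [pow_mul]
        rw [div_mul_eq_mul_div, div_le_div_iff₀ (by positivity) (by positivity)]
        calc (2:ℝ)^(2*(j+1)) * (((2*(j+1) : ℕ) : ℝ) * v^(2*(j+1)) * (j ! : ℝ)) * ((j+1)! : ℝ)
            = (2*(v^2)^(j+1)*2^(j+1)) * (2^(j+1) * (((j+1)! : ℝ) * ((j+1)! : ℝ))) := by
              rw [hv2, show (2:ℝ)^(2*(j+1)) = 2^(j+1)*2^(j+1) by rw [two_mul, pow_add], hfs]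
              push_cast
              ring
          _ ≤ (2*(v^2)^(j+1)*2^(j+1)) * ((2*(j+1))! : ℝ) := by
              exact mul_le_mul_of_nonneg_left hkey (by positivity)
          _ = 2*(2*v^2)^(j+1) * ((2*(j+1))! : ℝ) := by rw [mul_pow]; ring
    · -- odd case, m = 2k+1
      subst hk
      rw [gseq_odd]
      have h1 : ∫ x, f (2*k+1) x ∂μ
          ≤ 2^(2*k+1) / ((2*k+1)! : ℝ)
            * (((2*k+1 : ℕ) : ℝ) * v^(2*k+1) * Real.Gamma (((2*k+1 : ℕ) : ℝ)/2)) := by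
        rw [hc_eq]
        exact mul_le_mul_of_nonneg_left (hmom _ (by omega)) (by positivity)
      have hΓeq : (((2*k+1 : ℕ) : ℝ))/2 = (k:ℝ)+1/2 := by push_cast; ring
      have hmulΓ : ((2*k+1 : ℕ) : ℝ) * Real.Gamma ((k:ℝ)+1/2) = 2 * Real.Gamma ((k:ℝ)+3/2) := by
        have h := Real.Gamma_add_one (s := (k:ℝ)+1/2) (by positivity)
        rw [show (k:ℝ)+3/2 = ((k:ℝ)+1/2)+1 by ring, h]
        push_cast; ring
      rw [hΓeq] at h1
      refine h1.trans ?_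
      have hgb : Real.Gamma ((k:ℝ)+3/2) ≤ ((k+1)! : ℝ) := gamma_bound k
      have hkey : (4:ℝ)^k * (((k+1)! : ℝ) * (k ! : ℝ)) ≤ ((k:ℝ)+1) * ((2*k+1)! : ℝ) := by
        exact_mod_cast fact_odd k
      have hv21 : v^(2*k+1) = (v^2)^k * v := by rw [pow_succ, pow_mul]
      calc 2^(2*k+1) / ((2*k+1)! : ℝ)
            * (((2*k+1 : ℕ) : ℝ) * v^(2*k+1) * Real.Gamma ((k:ℝ)+1/2))
          = 2^(2*k+1) / ((2*k+1)! : ℝ)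
            * (v^(2*k+1) * (((2*k+1 : ℕ) : ℝ) * Real.Gamma ((k:ℝ)+1/2))) := by ring
        _ = 2^(2*k+1) / ((2*k+1)! : ℝ) * (v^(2*k+1) * (2 * Real.Gamma ((k:ℝ)+3/2))) := by
            rw [hmulΓ]
        _ ≤ 2^(2*k+1) / ((2*k+1)! : ℝ) * (v^(2*k+1) * (2 * ((k+1)! : ℝ))) := by
            apply mul_le_mul_of_nonneg_left _ (by positivity)
            apply mul_le_mul_of_nonneg_left _ (by positivity)
            exact mul_le_mul_of_nonneg_left hgb (by norm_num)
        _ ≤ 4*v*((k:ℝ)+1)*(v^2)^k/(k ! : ℝ) := by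
            rw [hv21, div_mul_eq_mul_div, div_le_div_iff₀ (by positivity) (by positivity)]
            calc (2:ℝ)^(2*k+1) * ((v^2)^k * v * (2 * ((k+1)! : ℝ))) * (k ! : ℝ)
                = (v * (v^2)^k * 4) * ((4:ℝ)^k * (((k+1)! : ℝ) * (k ! : ℝ))) := by
                  rw [show (2:ℝ)^(2*k+1) = 2 * 4^k by
                    rw [pow_succ, pow_mul]; norm_num; ring]
                  ring
              _ ≤ (v * (v^2)^k * 4) * (((k:ℝ)+1) * ((2*k+1)! : ℝ)) := by
                  exact mul_le_mul_of_nonneg_left hkey (by positivity)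
              _ = 4*v*((k:ℝ)+1)*(v^2)^k * ((2*k+1)! : ℝ) := by ring
  -- summability of the integrals
  have hcs : Summable (fun m => ∫ x, f m x ∂μ) :=
    Summable.of_nonneg_of_le hc_nonneg hcg hgS
  -- integrability of exp (2|W|)
  have hGmeas : Measurable (fun x => Real.exp (2*|W x|)) :=
    Real.measurable_exp.comp (hWm.abs.const_mul 2)
  have hpt : ∀ x, Real.exp (2*|W x|) = ∑' m, f m x := by
    intro x; exact exp_eq_tsum_real' _
  have hl1 : ∀ m, ∫⁻ x, ENNReal.ofReal (f m x) ∂μ = ENNReal.ofReal (∫ x, f m x ∂μ) :=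
    fun m => (MeasureTheory.ofReal_integral_eq_lintegral_ofReal (hf_int m)
      (Filter.Eventually.of_forall (hf_nonneg m))).symm
  have hlin : ∫⁻ x, ENNReal.ofReal (Real.exp (2*|W x|)) ∂μ
      = ∑' m, ENNReal.ofReal (∫ x, f m x ∂μ) := by
    calc ∫⁻ x, ENNReal.ofReal (Real.exp (2*|W x|)) ∂μ
        = ∫⁻ x, ∑' m, ENNReal.ofReal (f m x) ∂μ := by
          apply lintegral_congr
          intro x
          rw [hpt x, ENNReal.ofReal_tsum_of_nonneg (fun m => hf_nonneg m x)
            (Real.summable_pow_div_factorial _)]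
      _ = ∑' m, ∫⁻ x, ENNReal.ofReal (f m x) ∂μ :=
          MeasureTheory.lintegral_tsum (fun m => ((hf_meas m).ennreal_ofReal).aemeasurable)
      _ = ∑' m, ENNReal.ofReal (∫ x, f m x ∂μ) := tsum_congr hl1
  have hchain : ∑' m, ENNReal.ofReal (∫ x, f m x ∂μ) ≤ ENNReal.ofReal (∑' m, gseq v m) := by
    calc ∑' m, ENNReal.ofReal (∫ x, f m x ∂μ)
        ≤ ∑' m, ENNReal.ofReal (gseq v m) :=
          ENNReal.tsum_le_tsum (fun m => ENNReal.ofReal_le_ofReal (hcg m))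
      _ = ENNReal.ofReal (∑' m, gseq v m) :=
          (ENNReal.ofReal_tsum_of_nonneg (gseq_nonneg v hv.le) hgS).symm
  have hGint : Integrable (fun x => Real.exp (2*|W x|)) μ := by
    refine ⟨hGmeas.aestronglyMeasurable, ?_⟩
    rw [hasFiniteIntegral_iff_ofReal (Filter.Eventually.of_forall fun x => (Real.exp_pos _).le)]
    rw [hlin]
    exact lt_of_le_of_lt hchain ENNReal.ofReal_lt_top
  have hGval : ∫ x, Real.exp (2*|W x|) ∂μ ≤ ∑' m, gseq v m := by
    have h0 : ENNReal.ofReal (∫ x, Real.exp (2*|W x|) ∂μ)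
        ≤ ENNReal.ofReal (∑' m, gseq v m) := by
      rw [MeasureTheory.ofReal_integral_eq_lintegral_ofReal hGint
        (Filter.Eventually.of_forall fun x => (Real.exp_pos _).le), hlin]
      exact hchain
    exact (ENNReal.ofReal_le_ofReal_iff (tsum_nonneg (gseq_nonneg v hv.le))).mp h0
  have hexp2 : ∫ x, Real.exp (2*W x) ∂μ ≤ ∑' m, gseq v m := by
    refine le_trans (integral_mono hintexp2 hGint ?_) hGval
    intro x
    exact Real.exp_le_exp.2 (mul_le_mul_of_nonneg_left (le_abs_self _) (by norm_num))
  have hJ : (1:ℝ) ≤ ∫ x, Real.exp (W x) ∂μ := by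
    have h1 : ∫ x, (W x + 1) ∂μ ≤ ∫ x, Real.exp (W x) ∂μ :=
      integral_mono (hint.add (integrable_const 1)) hintexp (fun x => Real.add_one_le_exp (W x))
    rwa [integral_add hint (integrable_const 1), hmean, integral_const, probReal_univ, zero_add,
      smul_eq_mul, one_mul] at h1
  have hsplit : ∫ x, (Real.exp (W x) - 1)^2 ∂μ
      = ∫ x, Real.exp (2*W x) ∂μ - 2*∫ x, Real.exp (W x) ∂μ + 1 := by
    have hpt2 : ∀ x, (Real.exp (W x) - 1)^2 = Real.exp (2*W x) - 2*Real.exp (W x) + 1 := by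
      intro x; rw [two_mul, Real.exp_add]; ring
    simp_rw [hpt2]
    have hsub : Integrable (fun x => Real.exp (2*W x) - 2*Real.exp (W x)) μ :=
      hintexp2.sub (hintexp.const_mul 2)
    rw [integral_add hsub (integrable_const 1),
      integral_sub hintexp2 (hintexp.const_mul 2), integral_const_mul, integral_const,
      probReal_univ, smul_eq_mul, one_mul]
  rw [hsplit]
  have hfin := final_ineq v hv
  have h2 : ∫ x, Real.exp (2*W x) ∂μ
      ≤ (2*Real.exp (2*v^2) - 1) + 4*v*(1+v^2)*Real.exp (v^2) := by
    rw [← htsumg]; exact hexp2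
  linarith
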